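/- arXiv:2105.07617 — 4 statements merged into one kernel-verified Lean document; each statement's English description precedes it below -/
import Mathlib

section
/- For all integers r ≥ 0 and t ≥ 0, E(r,t+1) ≥ E(r,t), and equality holds if and only if r = 0. -/
/-- `betaP p t r = ∑_{i=0}^{r-1} C(t,i) (1-p)^i p^(t-i)`. -/
noncomputable def betaP (p : ℝ) (t r : ℕ) : ℝ :=
  ∑ i ∈ Finset.range r, (t.choose i : ℝ) * (1 - p) ^ i * p ^ (t - i)

/-- Expected rank function `E(r,t) = ∑_{i=0}^{t} C(t,i) (1-p)^i p^(t-i) * min{i,r}`. -/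
noncomputable def expRank (p : ℝ) (r t : ℕ) : ℝ :=
  ∑ i ∈ Finset.range (t + 1),
    (t.choose i : ℝ) * (1 - p) ^ i * p ^ (t - i) * ((min i r : ℕ) : ℝ)

open Finset

lemma step_sum (p : ℝ) (t : ℕ) (g : ℕ → ℝ) :
    ∑ i ∈ range (t + 2), ((t+1).choose i : ℝ) * (1 - p) ^ i * p ^ (t + 1 - i) * g i
      = p * ∑ i ∈ range (t + 1), (t.choose i : ℝ) * (1 - p) ^ i * p ^ (t - i) * g i
        + (1 - p) * ∑ i ∈ range (t + 1), (t.choose i : ℝ) * (1 - p) ^ i * p ^ (t - i) * g (i+1) := by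
  rw [Finset.sum_range_succ']
  have h1 : ∀ i ∈ range (t+1),
      (((t+1).choose (i+1) : ℝ)) * (1-p)^(i+1) * p^(t+1-(i+1)) * g (i+1)
        = (t.choose (i+1) : ℝ) * (1-p)^(i+1) * p^(t-i) * g (i+1)
          + (1-p) * ((t.choose i : ℝ) * (1-p)^i * p^(t-i) * g (i+1)) := by
    intro i hi
    have hs : t + 1 - (i+1) = t - i := by omega
    rw [Nat.choose_succ_succ, hs]
    push_cast
    ring
  rw [Finset.sum_congr rfl h1, Finset.sum_add_distrib, ← Finset.mul_sum]
  have h2 : ∑ i ∈ range (t+1), (t.choose (i+1):ℝ) * (1-p)^(i+1) * p^(t-i) * g (i+1)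
      + ((t+1).choose 0 : ℝ) * (1-p)^0 * p^(t+1-0) * g 0
      = p * ∑ i ∈ range (t+1), (t.choose i : ℝ) * (1-p)^i * p^(t-i) * g i := by
    rw [Finset.sum_range_succ, Nat.choose_succ_self]
    rw [Finset.mul_sum, Finset.sum_range_succ']
    have h3 : ∀ i ∈ range t,
        (t.choose (i+1):ℝ) * (1-p)^(i+1) * p^(t-i) * g (i+1)
          = p * ((t.choose (i+1):ℝ) * (1-p)^(i+1) * p^(t-(i+1)) * g (i+1)) := by
      intro i hi
      simp only [Finset.mem_range] at hi
      have : t - i = (t - (i+1)) + 1 := by omega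
      rw [this]
      ring
    rw [Finset.sum_congr rfl h3, ← Finset.mul_sum]
    simp
    ring
  linarith [h2]

lemma diff_sum (p : ℝ) (t r : ℕ) :
    (∑ i ∈ range (t+1), (t.choose i : ℝ) * (1-p)^i * p^(t-i) * ((min (i+1) r : ℕ):ℝ))
      - (∑ i ∈ range (t+1), (t.choose i : ℝ) * (1-p)^i * p^(t-i) * ((min i r : ℕ):ℝ))
      = betaP p t r := by
  rw [← Finset.sum_sub_distrib]
  have h : ∀ i ∈ range (t+1),
      (t.choose i : ℝ) * (1-p)^i * p^(t-i) * ((min (i+1) r : ℕ):ℝ)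
        - (t.choose i : ℝ) * (1-p)^i * p^(t-i) * ((min i r : ℕ):ℝ)
      = if i ∈ range r then (t.choose i : ℝ) * (1-p)^i * p^(t-i) else 0 := by
    intro i _
    by_cases hir : i < r
    · have h1 : min (i+1) r = min i r + 1 := by omega
      simp only [Finset.mem_range, hir, if_true, h1]
      push_cast
      ring
    · have h1 : min (i+1) r = min i r := by omega
      simp [Finset.mem_range, hir, h1]
  rw [Finset.sum_congr rfl h, Finset.sum_ite_mem]
  unfold betaP
  apply Finset.sum_subset
  · intro x hx
    simp only [Finset.mem_inter, Finset.mem_range] at hx ⊢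
    exact hx.2
  · intro x hx hnx
    simp only [Finset.mem_inter, Finset.mem_range, not_and, not_lt] at hx hnx
    have : t < x := by omega
    rw [Nat.choose_eq_zero_of_lt this]
    simp

lemma key (p : ℝ) (r t : ℕ) :
    expRank p r (t + 1) = expRank p r t + (1 - p) * betaP p t r := by
  have h := step_sum p t (fun i => ((min i r : ℕ) : ℝ))
  have hd := diff_sum p t r
  unfold expRank
  rw [show t + 1 + 1 = t + 2 from rfl, h]
  unfold expRank at hd
  linear_combination (1 - p) * hd

lemma beta_pos (p : ℝ) (hp0 : 0 < p) (hp1 : p < 1) (t r : ℕ) (hr : 0 < r) :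
    0 < betaP p t r := by
  unfold betaP
  apply Finset.sum_pos'
  · intro i _
    have h1 : (0:ℝ) ≤ 1 - p := by linarith
    exact mul_nonneg (mul_nonneg (by positivity) (pow_nonneg h1 _)) (pow_nonneg hp0.le _)
  · refine ⟨0, Finset.mem_range.mpr hr, ?_⟩
    simp
    positivity

theorem stmt1 (p : ℝ) (hp0 : 0 < p) (hp1 : p < 1) (r t : ℕ) :
    expRank p r t ≤ expRank p r (t + 1) ∧
    (expRank p r (t + 1) = expRank p r t ↔ r = 0) := by
  have hk := key p r t
  rcases Nat.eq_zero_or_pos r with hr | hr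
  · subst hr
    simp [betaP] at hk
    constructor
    · rw [hk]
    · simp [hk]
  · have hb := beta_pos p hp0 hp1 t r hr
    have hpos : 0 < (1 - p) * betaP p t r := by
      apply mul_pos (by linarith) hb
    constructor
    · linarith
    · constructor
      · intro h; exfalso; linarith
      · intro h; omega
end

section
/- For all integers t ≥ 0 and r ≥ 0, β_p(t,r) ≤ β_p(t+1,r+1), and equality holds if and only if t < r. -/
lemma betaP_key (p : ℝ) (t r : ℕ) :
    betaP p (t + 1) (r + 1) =
      betaP p t r + (t.choose r : ℝ) * (1 - p) ^ r * p ^ (t + 1 - r) := by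
  induction r with
  | zero => simp [betaP]
  | succ r ih =>
    have e1 : betaP p (t + 1) (r + 1 + 1) = betaP p (t + 1) (r + 1) +
        ((t + 1).choose (r + 1) : ℝ) * (1 - p) ^ (r + 1) * p ^ (t + 1 - (r + 1)) := by
      rw [betaP, Finset.sum_range_succ, ← betaP]
    have e2 : betaP p t (r + 1) = betaP p t r +
        (t.choose r : ℝ) * (1 - p) ^ r * p ^ (t - r) := by
      rw [betaP, Finset.sum_range_succ, ← betaP]
    rw [e1, ih, e2]
    rcases le_or_gt r t with h | h
    · have h1 : t + 1 - r = (t - r) + 1 := by omega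
      have h2 : t + 1 - (r + 1) = t - r := by omega
      rw [Nat.choose_succ_succ, h1, h2]
      push_cast [Nat.succ_eq_add_one]
      ring
    · have h1 : t.choose r = 0 := Nat.choose_eq_zero_of_lt h
      have h2 : t.choose (r + 1) = 0 := Nat.choose_eq_zero_of_lt (by omega)
      have h3 : (t + 1).choose (r + 1) = 0 := Nat.choose_eq_zero_of_lt (by omega)
      simp [h1, h2, h3]

theorem stmt5 (p : ℝ) (hp0 : 0 < p) (hp1 : p < 1) (t r : ℕ) :
    betaP p t r ≤ betaP p (t + 1) (r + 1) ∧
    (betaP p t r = betaP p (t + 1) (r + 1) ↔ t < r) := by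
  have hq : 0 < 1 - p := by linarith
  have key := betaP_key p t r
  have hterm : 0 ≤ (t.choose r : ℝ) * (1 - p) ^ r * p ^ (t + 1 - r) := by positivity
  refine ⟨by linarith, ?_⟩
  rw [key]
  constructor
  · intro h
    have hz : (t.choose r : ℝ) * (1 - p) ^ r * p ^ (t + 1 - r) = 0 := by linarith
    by_contra hc
    push_neg at hc
    have hle : r ≤ t := by omega
    have hpos : 0 < (t.choose r : ℝ) * (1 - p) ^ r * p ^ (t + 1 - r) := by
      have : 0 < t.choose r := Nat.choose_pos hle
      positivity
    linarith
  · intro h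
    have : t.choose r = 0 := Nat.choose_eq_zero_of_lt h
    simp [this]
end

section
/- If t_max ≤ ∑_{b∈L} r_b, then every assignment t : L → ℕ satisfying t_b ≤ r_b for all b ∈ L and ∑_{b∈L} t_b = t_max is a solution of problem (B), and the optimal value of (B) equals (1-p)·t_max. -/
lemma binom_mean (p : ℝ) (t : ℕ) :
    ∑ i ∈ Finset.range (t + 1), (t.choose i : ℝ) * (1 - p) ^ i * p ^ (t - i) * i
      = (1 - p) * t := by
  have h := congrArg (Polynomial.eval (1 - p)) (bernsteinPolynomial.sum_smul ℝ t)
  simp only [Polynomial.eval_finset_sum, bernsteinPolynomial, Polynomial.eval_smul,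
    Polynomial.eval_mul, Polynomial.eval_pow, Polynomial.eval_sub, Polynomial.eval_one,
    Polynomial.eval_X, Polynomial.eval_natCast, nsmul_eq_mul] at h
  simp only [show (1:ℝ) - (1 - p) = p by ring] at h
  rw [mul_comm ((1:ℝ) - p), ← h]
  exact Finset.sum_congr rfl fun i _ => by ring

lemma expRank_le (p : ℝ) (hp0 : 0 < p) (hp1 : p < 1) (r t : ℕ) :
    expRank p r t ≤ (1 - p) * t := by
  rw [← binom_mean p t, expRank]
  apply Finset.sum_le_sum
  intro i _
  have h1p : (0:ℝ) ≤ 1 - p := by linarith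
  have hc : (0:ℝ) ≤ (t.choose i : ℝ) * (1 - p) ^ i * p ^ (t - i) :=
    mul_nonneg (mul_nonneg (Nat.cast_nonneg _) (pow_nonneg h1p i)) (pow_nonneg hp0.le _)
  exact mul_le_mul_of_nonneg_left (by exact_mod_cast Nat.cast_le.mpr (min_le_left i r)) hc

lemma expRank_eq (p : ℝ) (r t : ℕ) (h : t ≤ r) :
    expRank p r t = (1 - p) * t := by
  rw [← binom_mean p t, expRank]
  apply Finset.sum_congr rfl
  intro i hi
  rw [Finset.mem_range] at hi
  have : min i r = i := min_eq_left (le_trans (Nat.lt_succ_iff.mp hi) h)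
  rw [this]

lemma exists_le (L : Finset ι) (r : ι → ℕ) (tmax : ℕ) (h : tmax ≤ ∑ b ∈ L, r b) :
    ∃ t : ι → ℕ, (∀ b ∈ L, t b ≤ r b) ∧ (∑ b ∈ L, t b) = tmax := by
  classical
  induction L using Finset.induction generalizing tmax with
  | empty => simp at h; exact ⟨fun _ => 0, by simp, by simp [h]⟩
  | @insert a s ha ih =>
    rw [Finset.sum_insert ha] at h
    obtain ⟨g, hg1, hg2⟩ := ih (tmax - min tmax (r a)) (by omega)
    refine ⟨fun b => if b = a then min tmax (r a) else g b, ?_, ?_⟩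
    · intro b hb
      rcases Finset.mem_insert.mp hb with rfl | hb
      · simp [min_le_right]
      · have hba : b ≠ a := fun e => ha (e ▸ hb)
        simpa [if_neg hba] using hg1 b hb
    · rw [Finset.sum_insert ha, if_pos rfl]
      rw [Finset.sum_congr rfl (fun b hb => if_neg (show b ≠ a from fun e => ha (e ▸ hb))), hg2]
      omega

theorem stmt10 {ι : Type*} (p : ℝ) (hp0 : 0 < p) (hp1 : p < 1)
    (L : Finset ι) (r : ι → ℕ) (tmax : ℕ) (h : tmax ≤ ∑ b ∈ L, r b) :
    (∀ t : ι → ℕ, (∀ b ∈ L, t b ≤ r b) → (∑ b ∈ L, t b) = tmax →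
      IsGreatest {x : ℝ | ∃ t' : ι → ℕ, (∑ b ∈ L, t' b) = tmax ∧
        x = ∑ b ∈ L, expRank p (r b) (t' b)} (∑ b ∈ L, expRank p (r b) (t b))) ∧
    IsGreatest {x : ℝ | ∃ t' : ι → ℕ, (∑ b ∈ L, t' b) = tmax ∧
      x = ∑ b ∈ L, expRank p (r b) (t' b)} ((1 - p) * tmax) := by
  have key : ∀ t : ι → ℕ, (∀ b ∈ L, t b ≤ r b) → (∑ b ∈ L, t b) = tmax →
      (∑ b ∈ L, expRank p (r b) (t b)) = (1 - p) * tmax := by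
    intro t h1 h2
    rw [Finset.sum_congr rfl (fun b hb => expRank_eq p (r b) (t b) (h1 b hb)),
      ← Finset.mul_sum, ← Nat.cast_sum, h2]
  have ub : ∀ x ∈ {x : ℝ | ∃ t' : ι → ℕ, (∑ b ∈ L, t' b) = tmax ∧
      x = ∑ b ∈ L, expRank p (r b) (t' b)}, x ≤ (1 - p) * tmax := by
    rintro x ⟨t', ht', rfl⟩
    calc ∑ b ∈ L, expRank p (r b) (t' b) ≤ ∑ b ∈ L, (1 - p) * (t' b) :=
          Finset.sum_le_sum fun b _ => expRank_le p hp0 hp1 (r b) (t' b)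
      _ = (1 - p) * tmax := by rw [← Finset.mul_sum, ← Nat.cast_sum, ht']
  obtain ⟨t0, ht01, ht02⟩ := exists_le L r tmax h
  have hmem : (1 - p) * tmax ∈ {x : ℝ | ∃ t' : ι → ℕ, (∑ b ∈ L, t' b) = tmax ∧
      x = ∑ b ∈ L, expRank p (r b) (t' b)} := ⟨t0, ht02, (key t0 ht01 ht02).symm⟩
  refine ⟨fun t h1 h2 => ?_, hmem, ub⟩
  rw [key t h1 h2]
  exact ⟨hmem, ub⟩
end

section
/- Let L be a block with |L| ≥ 2. If an assignment {t_b}_{b∈L} solves problem (B) and satisfies t_b ≥ r_b for all b ∈ L, then for all m, n ∈ L with r_m < r_n one has t_m < t_n. -/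
section aux

variable {p : ℝ}

lemma term_nonneg (hp0 : 0 < p) (hp1 : p < 1) (t i : ℕ) :
    0 ≤ (t.choose i : ℝ) * (1 - p) ^ i * p ^ (t - i) := by
  have h1 : (0:ℝ) < 1 - p := by linarith
  positivity

lemma betaP_zero (t : ℕ) : betaP p t 0 = 0 := by simp [betaP]

lemma betaP_succ_r (t r : ℕ) :
    betaP p t (r + 1) = betaP p t r + (t.choose r : ℝ) * (1 - p) ^ r * p ^ (t - r) :=
  Finset.sum_range_succ _ _

lemma betaP_mono_r (hp0 : 0 < p) (hp1 : p < 1) (t : ℕ) {r r' : ℕ} (h : r ≤ r') :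
    betaP p t r ≤ betaP p t r' :=
  Finset.sum_le_sum_of_subset_of_nonneg (Finset.range_subset_range.2 h)
    (fun i _ _ => term_nonneg hp0 hp1 t i)

lemma sum_w (t : ℕ) :
    (∑ i ∈ Finset.range (t + 1), (t.choose i : ℝ) * (1 - p) ^ i * p ^ (t - i)) = 1 := by
  have h := add_pow (1 - p) p t
  rw [sub_add_cancel, one_pow] at h
  calc (∑ i ∈ Finset.range (t + 1), (t.choose i : ℝ) * (1 - p) ^ i * p ^ (t - i))
      = ∑ i ∈ Finset.range (t + 1), (1 - p) ^ i * p ^ (t - i) * (t.choose i : ℝ) :=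
        Finset.sum_congr rfl (fun i _ => by ring)
    _ = 1 := h.symm

lemma betaP_pascal (t r : ℕ) :
    betaP p (t + 1) (r + 1) = p * betaP p t (r + 1) + (1 - p) * betaP p t r := by
  unfold betaP
  rw [Finset.mul_sum, Finset.mul_sum,
    Finset.sum_range_succ' (fun i => ((t + 1).choose i : ℝ) * (1 - p) ^ i * p ^ (t + 1 - i)) r,
    Finset.sum_range_succ' (fun i => p * ((t.choose i : ℝ) * (1 - p) ^ i * p ^ (t - i))) r]
  simp only [Nat.choose_zero_right, Nat.cast_one, pow_zero, Nat.sub_zero, one_mul, mul_one]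
  have hterm : ∀ i ∈ Finset.range r,
      ((t + 1).choose (i + 1) : ℝ) * (1 - p) ^ (i + 1) * p ^ (t + 1 - (i + 1))
      = p * ((t.choose (i + 1) : ℝ) * (1 - p) ^ (i + 1) * p ^ (t - (i + 1)))
        + (1 - p) * ((t.choose i : ℝ) * (1 - p) ^ i * p ^ (t - i)) := by
    intro i _
    simp only [Nat.succ_sub_succ]
    rw [Nat.choose_succ_succ]
    rcases Nat.lt_or_ge i t with h | h
    · have h1 : t - i = (t - (i + 1)) + 1 := by omega
      push_cast
      rw [h1]
      ring
    · have h2 : t.choose (i + 1) = 0 := Nat.choose_eq_zero_of_lt (by omega)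
      rw [h2]
      push_cast
      ring
  rw [Finset.sum_congr rfl hterm, Finset.sum_add_distrib]
  ring

lemma betaP_succ_t_le (hp0 : 0 < p) (hp1 : p < 1) (t r : ℕ) :
    betaP p (t + 1) r ≤ betaP p t r := by
  cases r with
  | zero => simp [betaP_zero]
  | succ u =>
    rw [betaP_pascal]
    have h1 : betaP p t u ≤ betaP p t (u + 1) := betaP_mono_r hp0 hp1 t (Nat.le_succ u)
    nlinarith

lemma betaP_anti_t (hp0 : 0 < p) (hp1 : p < 1) (r : ℕ) {t t' : ℕ} (h : t ≤ t') :
    betaP p t' r ≤ betaP p t r := by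
  induction t', h using Nat.le_induction with
  | base => exact le_refl _
  | succ k hk ih => exact le_trans (betaP_succ_t_le hp0 hp1 k r) ih

lemma betaP_strict (hp0 : 0 < p) (hp1 : p < 1) {u s : ℕ} (h : u ≤ s) :
    betaP p s u < betaP p (s + 1) (u + 1) := by
  rw [betaP_pascal, betaP_succ_r]
  have h1 : (0:ℝ) < (s.choose u : ℝ) := by
    exact_mod_cast Nat.choose_pos h
  have hq : (0:ℝ) < 1 - p := by linarith
  have h2 : (0:ℝ) < (s.choose u : ℝ) * (1 - p) ^ u * p ^ (s - u) := by positivity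
  nlinarith [mul_pos hp0 h2]

lemma min_cast (i r : ℕ) :
    ((min i r : ℕ) : ℝ) = ∑ k ∈ Finset.range r, if k < i then (1:ℝ) else 0 := by
  rw [Finset.sum_boole]
  have hfil : Finset.filter (fun k => k < i) (Finset.range r) = Finset.range (min i r) := by
    ext k
    simp only [Finset.mem_filter, Finset.mem_range, Nat.lt_min]
    tauto
  rw [hfil, Finset.card_range]

lemma expRank_eq_s11 (hp0 : 0 < p) (hp1 : p < 1) (r t : ℕ) :
    expRank p r t = (r : ℝ) - ∑ k ∈ Finset.range r, betaP p t (k + 1) := by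
  unfold expRank
  have hstep1 : ∀ i ∈ Finset.range (t + 1),
      (t.choose i : ℝ) * (1 - p) ^ i * p ^ (t - i) * ((min i r : ℕ) : ℝ)
      = ∑ k ∈ Finset.range r,
          ((t.choose i : ℝ) * (1 - p) ^ i * p ^ (t - i)) * (if k < i then (1:ℝ) else 0) := by
    intro i _
    rw [min_cast, Finset.mul_sum]
  rw [Finset.sum_congr rfl hstep1, Finset.sum_comm]
  have hinner : ∀ k ∈ Finset.range r,
      (∑ i ∈ Finset.range (t + 1),
        ((t.choose i : ℝ) * (1 - p) ^ i * p ^ (t - i)) * (if k < i then (1:ℝ) else 0))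
      = 1 - betaP p t (k + 1) := by
    intro k _
    have hsplit : ∀ i ∈ Finset.range (t + 1),
        ((t.choose i : ℝ) * (1 - p) ^ i * p ^ (t - i)) * (if k < i then (1:ℝ) else 0)
        = (t.choose i : ℝ) * (1 - p) ^ i * p ^ (t - i)
          - (if i ≤ k then (t.choose i : ℝ) * (1 - p) ^ i * p ^ (t - i) else 0) := by
      intro i _
      by_cases h : k < i
      · rw [if_pos h, if_neg (by omega)]; ring
      · rw [if_neg h, if_pos (by omega)]; ring
    rw [Finset.sum_congr rfl hsplit, Finset.sum_sub_distrib, sum_w t]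
    congr 1
    rw [Finset.sum_ite, Finset.sum_const_zero, add_zero]
    have hfil : Finset.filter (fun i => i ≤ k) (Finset.range (t + 1))
        = Finset.range (min (k + 1) (t + 1)) := by
      ext i
      simp only [Finset.mem_filter, Finset.mem_range, Nat.lt_min]
      omega
    rw [hfil]
    unfold betaP
    have hsub : Finset.range (min (k + 1) (t + 1)) ⊆ Finset.range (k + 1) :=
      Finset.range_subset_range.2 (min_le_left _ _)
    refine Finset.sum_subset hsub ?_
    intro i hi hni
    have hti : t < i := by
      simp only [Finset.mem_range, Nat.lt_min, not_and_or, not_lt] at hi hni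
      omega
    simp [Nat.choose_eq_zero_of_lt hti]
  rw [Finset.sum_congr rfl hinner, Finset.sum_sub_distrib, Finset.sum_const,
    Finset.card_range, nsmul_eq_mul, mul_one]

lemma expRank_step (hp0 : 0 < p) (hp1 : p < 1) (r t : ℕ) :
    expRank p r (t + 1) = expRank p r t + (1 - p) * betaP p t r := by
  rw [expRank_eq_s11 hp0 hp1, expRank_eq_s11 hp0 hp1]
  have h1 : ∀ k ∈ Finset.range r, betaP p (t + 1) (k + 1)
      = betaP p t (k + 1) - (1 - p) * (betaP p t (k + 1) - betaP p t k) := by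
    intro k _
    rw [betaP_pascal]
    ring
  rw [Finset.sum_congr rfl h1, Finset.sum_sub_distrib, ← Finset.mul_sum,
    Finset.sum_range_sub (betaP p t) r, betaP_zero, sub_zero]
  ring

end aux

theorem stmt11 {ι : Type*} (p : ℝ) (hp0 : 0 < p) (hp1 : p < 1)
    (L : Finset ι) (hcard : 2 ≤ L.card) (r : ι → ℕ) (tmax : ℕ)
    (t : ι → ℕ) (hfeas : (∑ b ∈ L, t b) = tmax)
    (hopt : ∀ t' : ι → ℕ, (∑ b ∈ L, t' b) = tmax →
      ∑ b ∈ L, expRank p (r b) (t' b) ≤ ∑ b ∈ L, expRank p (r b) (t b))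
    (hge : ∀ b ∈ L, r b ≤ t b) :
    ∀ m ∈ L, ∀ n ∈ L, r m < r n → t m < t n := by
  classical
  intro m hm n hn hrmn
  by_contra hcon
  push_neg at hcon
  have hmn : m ≠ n := by
    intro h; rw [h] at hrmn; exact lt_irrefl _ hrmn
  have hrn1 : 1 ≤ r n := by omega
  have htn1 : 1 ≤ t n := le_trans hrn1 (hge n hn)
  have htm1 : 1 ≤ t m := le_trans htn1 hcon
  set t' : ι → ℕ := Function.update (Function.update t m (t m - 1)) n (t n + 1) with ht'
  have ht'm : t' m = t m - 1 := by
    simp [ht', Function.update_apply, hmn]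
  have ht'n : t' n = t n + 1 := by
    simp [ht', Function.update_apply]
  have ht'other : ∀ b, b ≠ m → b ≠ n → t' b = t b := by
    intro b hbm hbn
    simp [ht', Function.update_apply, hbm, hbn]
  have hnem : n ∈ L.erase m := Finset.mem_erase.2 ⟨hmn.symm, hn⟩
  have hdecompN : ∀ g : ι → ℕ,
      ∑ b ∈ L, g b = g m + (g n + ∑ b ∈ (L.erase m).erase n, g b) := by
    intro g
    rw [Finset.add_sum_erase _ g hnem, Finset.add_sum_erase _ g hm]
  have hdecompR : ∀ g : ι → ℝ,
      ∑ b ∈ L, g b = g m + (g n + ∑ b ∈ (L.erase m).erase n, g b) := by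
    intro g
    rw [Finset.add_sum_erase _ g hnem, Finset.add_sum_erase _ g hm]
  have hother_eq : ∀ b ∈ (L.erase m).erase n, t' b = t b := by
    intro b hb
    rcases Finset.mem_erase.1 hb with ⟨hbn, hb2⟩
    rcases Finset.mem_erase.1 hb2 with ⟨hbm, _⟩
    exact ht'other b hbm hbn
  have hrestN : ∑ b ∈ (L.erase m).erase n, t' b = ∑ b ∈ (L.erase m).erase n, t b :=
    Finset.sum_congr rfl hother_eq
  -- feasibility of t'
  have hfeas' : (∑ b ∈ L, t' b) = tmax := by
    have h1 := hdecompN t'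
    have h2 := hdecompN t
    rw [ht'm, ht'n, hrestN] at h1
    omega
  -- expRank changes
  obtain ⟨tm', htm'⟩ : ∃ k, t m = k + 1 := ⟨t m - 1, by omega⟩
  obtain ⟨s, hs⟩ : ∃ s, t n = s + 1 := ⟨t n - 1, by omega⟩
  obtain ⟨u, hu⟩ : ∃ u, r n = u + 1 := ⟨r n - 1, by omega⟩
  have hEm : expRank p (r m) (t m) = expRank p (r m) (t m - 1) + (1 - p) * betaP p (t m - 1) (r m) := by
    have : t m - 1 + 1 = t m := by omega
    rw [← this, expRank_step hp0 hp1]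
    simp
  have hEn : expRank p (r n) (t' n) = expRank p (r n) (t n) + (1 - p) * betaP p (t n) (r n) := by
    rw [ht'n, expRank_step hp0 hp1]
  -- key strict inequality
  have hkey : betaP p (t m - 1) (r m) < betaP p (t n) (r n) := by
    have hus : u ≤ s := by
      have := hge n hn; omega
    calc betaP p (t m - 1) (r m)
        ≤ betaP p s (r m) := betaP_anti_t hp0 hp1 (r m) (by omega)
      _ ≤ betaP p s u := betaP_mono_r hp0 hp1 s (by omega)
      _ < betaP p (s + 1) (u + 1) := betaP_strict hp0 hp1 hus
      _ = betaP p (t n) (r n) := by rw [← hs, ← hu]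
  have hlt : ∑ b ∈ L, expRank p (r b) (t b) < ∑ b ∈ L, expRank p (r b) (t' b) := by
    rw [hdecompR (fun b => expRank p (r b) (t b)), hdecompR (fun b => expRank p (r b) (t' b))]
    have hrest : ∑ b ∈ (L.erase m).erase n, expRank p (r b) (t' b)
        = ∑ b ∈ (L.erase m).erase n, expRank p (r b) (t b) :=
      Finset.sum_congr rfl (fun b hb => by rw [hother_eq b hb])
    rw [hrest, ht'm, hEn, hEm]
    have hq : (0:ℝ) < 1 - p := by linarith
    nlinarith [mul_lt_mul_of_pos_left hkey hq]
  exact absurd (hopt t' hfeas') (not_le.2 hlt)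
end
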